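/- Let A = [a_ij] be an n×n fully indecomposable symmetric (0,1)-matrix which is the pattern of an RCDS doubly stochastic matrix. Then there exist a symmetric RCDS doubly stochastic matrix X = [x_ij] with ξ(X) = ξ(A) and a real vector w = (w_1,…,w_n) such that x_ij = a_ij · (w_i + w_j) for all 1 ≤ i, j ≤ n. -/

import Mathlib

open Finset


/-- `X` is doubly stochastic. -/
def DoublyStochastic {n : ℕ} (X : Matrix (Fin n) (Fin n) ℝ) : Prop :=
  (∀ i j, 0 ≤ X i j) ∧ (∀ i, ∑ j, X i j = 1) ∧ (∀ j, ∑ i, X i j = 1)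

/-- `X` has restricted constant diagonal sums. -/
def RCDS {n : ℕ} (X : Matrix (Fin n) (Fin n) ℝ) : Prop :=
  ∀ σ τ : Equiv.Perm (Fin n), (∀ i, 0 < X i (σ i)) → (∀ i, 0 < X i (τ i)) →
    ∑ i, X i (σ i) = ∑ i, X i (τ i)

/-- `A` is fully indecomposable. -/
def FullyIndecomposable {n : ℕ} (A : Matrix (Fin n) (Fin n) ℝ) : Prop :=
  ¬ ∃ (I J : Finset (Fin n)), I.Nonempty ∧ J.Nonempty ∧ I.card + J.card = n ∧
      ∀ i ∈ I, ∀ j ∈ J, A i j = 0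

lemma permMatrix_apply {n : ℕ} (σ : Equiv.Perm (Fin n)) (i j : Fin n) :
    σ.permMatrix ℝ i j = if σ i = j then 1 else 0 := by
  simp [Equiv.Perm.permMatrix, PEquiv.toMatrix_apply, Equiv.toPEquiv_apply]

lemma pair_sum {n : ℕ} (Z : Matrix (Fin n) (Fin n) ℝ) (w : Equiv.Perm (Fin n) → ℝ) :
    ∑ i, ∑ j, Z i j * (∑ σ, w σ • σ.permMatrix ℝ) i j
      = ∑ σ, w σ * ∑ i, Z i (σ i) := by
  have h : ∀ i j, (∑ σ, w σ • σ.permMatrix ℝ) i j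
      = ∑ σ : Equiv.Perm (Fin n), w σ * (if σ i = j then 1 else 0) := by
    intro i j
    simp only [Finset.sum_apply, Matrix.sum_apply, Matrix.smul_apply, permMatrix_apply,
      smul_eq_mul]
  calc ∑ i, ∑ j, Z i j * (∑ σ, w σ • σ.permMatrix ℝ) i j
      = ∑ σ : Equiv.Perm (Fin n), ∑ i, ∑ j, Z i j * (w σ * (if σ i = j then 1 else 0)) := by
        simp only [h, Finset.mul_sum]
        have h2 : ∀ i : Fin n, (∑ j, ∑ σ : Equiv.Perm (Fin n), Z i j * (w σ * (if σ i = j then 1 else 0)))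
            = ∑ σ : Equiv.Perm (Fin n), ∑ j, Z i j * (w σ * (if σ i = j then 1 else 0)) :=
          fun i => Finset.sum_comm
        simp only [h2]
        exact Finset.sum_comm
    _ = ∑ σ, w σ * ∑ i, Z i (σ i) := by
        congr 1; funext σ
        rw [Finset.mul_sum]
        congr 1; funext i
        rw [Finset.sum_eq_single (σ i)] <;> simp +contextual [eq_comm, mul_comm]

/-- Key pairing lemma: an RCDS doubly stochastic matrix is orthogonal (Frobenius) to
every matrix supported on its pattern with zero row and column sums. -/
lemma pairing_zero {n : ℕ} {Z M : Matrix (Fin n) (Fin n) ℝ}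
    (hDS : DoublyStochastic Z) (hR : RCDS Z)
    (hsupp : ∀ i j, Z i j = 0 → M i j = 0)
    (hrow : ∀ i, ∑ j, M i j = 0) (hcol : ∀ j, ∑ i, M i j = 0) :
    ∑ i, ∑ j, Z i j * M i j = 0 := by
  classical
  obtain ⟨hpos, hr1, hc1⟩ := hDS
  by_cases hM0 : ∀ i j, M i j = 0
  · simp [hM0]
  -- choose ε
  have hsne : (Finset.univ.filter fun p : Fin n × Fin n => M p.1 p.2 ≠ 0).Nonempty := by
    push_neg at hM0
    obtain ⟨i, j, h⟩ := hM0
    exact ⟨(i, j), by simp [h]⟩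
  set s := Finset.univ.filter fun p : Fin n × Fin n => M p.1 p.2 ≠ 0 with hs
  have hZpos : ∀ p ∈ s, 0 < Z p.1 p.2 := by
    intro p hp
    simp only [hs, Finset.mem_filter] at hp
    rcases lt_or_eq_of_le (hpos p.1 p.2) with h | h
    · exact h
    · exact absurd (hsupp _ _ h.symm) hp.2
  set ε := s.inf' hsne fun p => Z p.1 p.2 / |M p.1 p.2| with hε
  have hεpos : 0 < ε := by
    rw [hε, Finset.lt_inf'_iff]
    intro p hp
    have hMp : M p.1 p.2 ≠ 0 := by simpa [hs] using (Finset.mem_filter.mp hp).2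
    exact div_pos (hZpos p hp) (abs_pos.mpr hMp)
  have hεle : ∀ i j, M i j ≠ 0 → ε * |M i j| ≤ Z i j := by
    intro i j h
    have hmem : (i, j) ∈ s := by simp [hs, h]
    have := Finset.inf'_le (fun p : Fin n × Fin n => Z p.1 p.2 / |M p.1 p.2|) hmem
    calc ε * |M i j| ≤ (Z i j / |M i j|) * |M i j| :=
          mul_le_mul_of_nonneg_right this (abs_nonneg _)
      _ = Z i j := div_mul_cancel₀ _ (abs_ne_zero.mpr h)
  -- the two perturbed matrices
  have key : ∀ c : ℝ, |c| ≤ ε → Z + c • M ∈ doublyStochastic ℝ (Fin n) := by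
    intro c hc
    rw [mem_doublyStochastic_iff_sum]
    refine ⟨fun i j => ?_, fun i => ?_, fun j => ?_⟩
    · simp only [Matrix.add_apply, Matrix.smul_apply, smul_eq_mul]
      by_cases h : M i j = 0
      · simp [h, hpos i j]
      · have h1 := hεle i j h
        have h2 : |c * M i j| ≤ ε * |M i j| := by
          rw [abs_mul]
          exact mul_le_mul_of_nonneg_right hc (abs_nonneg _)
        have := neg_abs_le (c * M i j)
        linarith
    · simp only [Matrix.add_apply, Matrix.smul_apply, smul_eq_mul]
      rw [Finset.sum_add_distrib, ← Finset.mul_sum, hr1, hrow, mul_zero, add_zero]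
    · simp only [Matrix.add_apply, Matrix.smul_apply, smul_eq_mul]
      rw [Finset.sum_add_distrib, ← Finset.mul_sum, hc1, hcol, mul_zero, add_zero]
  obtain ⟨wp, hwp0, hwp1, hwp⟩ :=
    exists_eq_sum_perm_of_mem_doublyStochastic (key ε (by rw [abs_of_pos hεpos]))
  obtain ⟨wm, hwm0, hwm1, hwm⟩ :=
    exists_eq_sum_perm_of_mem_doublyStochastic (key (-ε) (by rw [abs_neg, abs_of_pos hεpos]))
  -- supportedness of permutations with positive weight
  have hsupported : ∀ (c : ℝ) (w : Equiv.Perm (Fin n) → ℝ), (∀ σ, 0 ≤ w σ) →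
      (∑ σ, w σ • σ.permMatrix ℝ = Z + c • M) →
      ∀ σ, w σ ≠ 0 → ∀ i, 0 < Z i (σ i) := by
    intro c w hw0 hsum σ hσ i
    have h1 : w σ ≤ (Z + c • M) i (σ i) := by
      rw [← hsum]
      have : (∑ τ, w τ • τ.permMatrix ℝ) i (σ i)
          = ∑ τ : Equiv.Perm (Fin n), w τ * (if τ i = σ i then 1 else 0) := by
        simp only [Finset.sum_apply, Matrix.sum_apply, Matrix.smul_apply, permMatrix_apply,
          smul_eq_mul]
      rw [this]
      have := Finset.single_le_sum (f := fun τ : Equiv.Perm (Fin n) => w τ * (if τ i = σ i then 1 else 0))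
        (fun τ _ => mul_nonneg (hw0 τ) (by positivity)) (Finset.mem_univ σ)
      simpa using this
    have h2 : 0 < (Z + c • M) i (σ i) := lt_of_lt_of_le (lt_of_le_of_ne (hw0 σ) (Ne.symm hσ)) h1
    rcases lt_or_eq_of_le (hpos i (σ i)) with h | h
    · exact h
    · exfalso
      have hM : M i (σ i) = 0 := hsupp _ _ h.symm
      rw [Matrix.add_apply, Matrix.smul_apply, hM, ← h] at h2
      simp at h2
  have hsp := hsupported ε wp hwp0 hwp
  have hsm := hsupported (-ε) wm hwm0 hwm
  -- the two pairings
  have hp : ∑ i, ∑ j, Z i j * (Z + ε • M) i j = ∑ σ, wp σ * ∑ i, Z i (σ i) := by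
    rw [← hwp]; exact pair_sum Z wp
  have hm : ∑ i, ∑ j, Z i j * (Z + (-ε) • M) i j = ∑ σ, wm σ * ∑ i, Z i (σ i) := by
    rw [← hwm]; exact pair_sum Z wm
  have heq : ∑ σ, wp σ * ∑ i, Z i (σ i) = ∑ σ, wm σ * ∑ i, Z i (σ i) := by
    calc ∑ σ, wp σ * ∑ i, Z i (σ i)
        = ∑ σ, ∑ τ, wp σ * wm τ * ∑ i, Z i (σ i) := by
          congr 1; funext σ
          rw [← Finset.sum_mul, ← Finset.mul_sum, hwm1]
          ring
      _ = ∑ σ, ∑ τ, wp σ * wm τ * ∑ i, Z i (τ i) := by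
          congr 1; funext σ; congr 1; funext τ
          by_cases h1 : wp σ = 0
          · simp [h1]
          by_cases h2 : wm τ = 0
          · simp [h2]
          congr 1
          exact hR σ τ (hsp σ h1) (hsm τ h2)
      _ = ∑ σ, wm σ * ∑ i, Z i (σ i) := by
          rw [Finset.sum_comm]
          congr 1; funext τ
          rw [← Finset.sum_mul, ← Finset.sum_mul, hwp1]
          ring
  have hexp : ∀ c : ℝ, ∑ i, ∑ j, Z i j * (Z + c • M) i j
      = (∑ i, ∑ j, Z i j * Z i j) + c * ∑ i, ∑ j, Z i j * M i j := by
    intro c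
    have h1 : ∀ i j, Z i j * (Z + c • M) i j = Z i j * Z i j + c * (Z i j * M i j) := by
      intro i j
      simp only [Matrix.add_apply, Matrix.smul_apply, smul_eq_mul]
      ring
    simp only [h1, Finset.sum_add_distrib, ← Finset.mul_sum]
  rw [hexp] at hp hm
  have h1 : (∑ i, ∑ j, Z i j * Z i j) + ε * ∑ i, ∑ j, Z i j * M i j
      = (∑ i, ∑ j, Z i j * Z i j) + (-ε) * ∑ i, ∑ j, Z i j * M i j :=
    hp.trans (heq.trans hm.symm)
  have h2 : ε * ∑ i, ∑ j, Z i j * M i j = (-ε) * ∑ i, ∑ j, Z i j * M i j := by linarith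
  rw [neg_mul] at h2
  have h4 : ε * ∑ i, ∑ j, Z i j * M i j = 0 := by linarith
  exact (mul_eq_zero.mp h4).resolve_left hεpos.ne'

/-- Representation lemma: an RCDS doubly stochastic matrix with (0,1)-pattern `A`
has the form `Z i j = A i j * (u i + v j)`. -/
lemma exists_uv {n : ℕ} (A Z : Matrix (Fin n) (Fin n) ℝ)
    (hA01 : ∀ i j, A i j = 0 ∨ A i j = 1)
    (hDS : DoublyStochastic Z) (hR : RCDS Z)
    (hZpat : ∀ i j, Z i j = 0 ↔ A i j = 0) :
    ∃ u v : Fin n → ℝ, ∀ i j, Z i j = A i j * (u i + v j) := by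
  classical
  let e : (Fin n × Fin n → ℝ) ≃ₗ[ℝ] EuclideanSpace ℝ (Fin n × Fin n) := (WithLp.linearEquiv 2 ℝ (Fin n × Fin n → ℝ)).symm
  let T0 : ((Fin n → ℝ) × (Fin n → ℝ)) →ₗ[ℝ] (Fin n × Fin n → ℝ) :=
    { toFun := fun uv p => A p.1 p.2 * (uv.1 p.1 + uv.2 p.2)
      map_add' := by
        intro a b
        funext p
        simp only [Prod.fst_add, Prod.snd_add, Pi.add_apply]
        ring
      map_smul' := by
        intro c a
        funext p
        simp only [Prod.smul_fst, Prod.smul_snd, Pi.smul_apply, smul_eq_mul, RingHom.id_apply]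
        ring }
  let T : ((Fin n → ℝ) × (Fin n → ℝ)) →ₗ[ℝ] EuclideanSpace ℝ (Fin n × Fin n) := e.toLinearMap.comp T0
  set U : Submodule ℝ (EuclideanSpace ℝ (Fin n × Fin n)) := LinearMap.range T with hU
  have hT : ∀ (uv : (Fin n → ℝ) × (Fin n → ℝ)) (p : Fin n × Fin n),
      T uv p = A p.1 p.2 * (uv.1 p.1 + uv.2 p.2) := fun uv p => rfl
  have innerform : ∀ (x y : EuclideanSpace ℝ (Fin n × Fin n)), (inner ℝ x y : ℝ) = ∑ i, ∑ j, x (i, j) * y (i, j) := by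
    intro x y
    simp only [PiLp.inner_apply, Fintype.sum_prod_type, RCLike.inner_apply, conj_trivial, mul_comm]
  have keymem : e (fun p => Z p.1 p.2) ∈ U := by
    rw [← Submodule.orthogonal_orthogonal U]
    rw [Submodule.mem_orthogonal]
    intro N hN
    rw [Submodule.mem_orthogonal] at hN
    set M : Matrix (Fin n) (Fin n) ℝ := Matrix.of fun i j => A i j * N (i, j) with hM
    have hMrow : ∀ i, ∑ j, M i j = 0 := by
      intro i
      have h1 := hN (T (Pi.single i 1, 0)) (LinearMap.mem_range_self T _)
      rw [innerform] at h1
      have h2 : ∀ i' j, (T (Pi.single i 1, 0)) (i', j) = if i' = i then A i' j else 0 := by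
        intro i' j
        rw [hT]
        by_cases h : i' = i <;> simp [h, Pi.single_apply]
      simp only [h2] at h1
      rw [Finset.sum_eq_single i] at h1
      · simpa [hM, Finset.mul_sum] using h1
      · intro b _ hb
        simp [hb]
      · simp
    have hMcol : ∀ j, ∑ i, M i j = 0 := by
      intro j
      have h1 := hN (T (0, Pi.single j 1)) (LinearMap.mem_range_self T _)
      rw [innerform] at h1
      have h2 : ∀ i j', (T (0, Pi.single j 1)) (i, j') = if j' = j then A i j' else 0 := by
        intro i j'
        rw [hT]
        by_cases h : j' = j <;> simp [h, Pi.single_apply]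
      simp only [h2] at h1
      rw [Finset.sum_comm] at h1
      rw [Finset.sum_eq_single j] at h1
      · simpa [hM, Finset.mul_sum] using h1
      · intro b _ hb
        simp [hb]
      · simp
    have hMsupp : ∀ i j, Z i j = 0 → M i j = 0 := by
      intro i j h
      simp [hM, (hZpat i j).mp h]
    have hzero := pairing_zero hDS hR hMsupp hMrow hMcol
    rw [innerform]
    have : ∀ i j, N (i, j) * (e fun p => Z p.1 p.2) (i, j) = Z i j * M i j := by
      intro i j
      show N (i, j) * Z i j = Z i j * (A i j * N (i, j))
      rcases eq_or_ne (Z i j) 0 with h | h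
      · simp [h]
      · rcases hA01 i j with h' | h'
        · exact absurd ((hZpat i j).mpr h') h
        · rw [h']; ring
    simp only [this]
    exact hzero
  obtain ⟨⟨u, v⟩, huv⟩ := keymem
  refine ⟨u, v, fun i j => ?_⟩
  have h3 : T0 (u, v) = fun p => Z p.1 p.2 := e.injective huv
  exact (congrFun h3 (i, j)).symm

/-- Connectivity from full indecomposability: a function constant along edges of `A`
is globally constant. -/
lemma fi_constant {n : ℕ} {A : Matrix (Fin n) (Fin n) ℝ} (hFI : FullyIndecomposable A)
    (f : Fin n → ℝ) (hedge : ∀ i j, A i j ≠ 0 → f i = f j) :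
    ∀ i j, f i = f j := by
  classical
  by_contra hcon
  push_neg at hcon
  obtain ⟨i0, j0, hne⟩ := hcon
  set S : Finset (Fin n) := Finset.univ.filter fun k => f k = f i0 with hS
  refine hFI ⟨S, Sᶜ, ⟨i0, by simp [hS]⟩, ⟨j0, by simp [hS, hne.symm]⟩, ?_, ?_⟩
  · rw [Finset.card_compl, Fintype.card_fin]
    have h1 : S.card ≤ n := by simpa using Finset.card_le_univ S
    omega
  · intro i hi j hj
    by_contra h
    have h1 : f i = f j := hedge i j h
    simp only [hS, Finset.mem_filter, Finset.mem_univ, true_and] at hi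
    simp only [hS, Finset.mem_compl, Finset.mem_filter, Finset.mem_univ, true_and] at hj
    exact hj (h1 ▸ hi)

/-- If a fully indecomposable symmetric (0,1)-matrix `A` is the pattern of an
RCDS doubly stochastic matrix, then there are a *symmetric* RCDS doubly
stochastic matrix `X` with pattern `A` and a vector `w` with
`X i j = A i j * (w i + w j)` for all `i, j`. -/
theorem rcds_symmetric_pattern {n : ℕ} (A : Matrix (Fin n) (Fin n) ℝ)
    (hA01 : ∀ i j, A i j = 0 ∨ A i j = 1)
    (hsymm : A.IsSymm)
    (hFI : FullyIndecomposable A)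
    (hpat : ∃ X : Matrix (Fin n) (Fin n) ℝ, DoublyStochastic X ∧ RCDS X ∧
        (∀ i j, X i j = 0 ↔ A i j = 0)) :
    ∃ (X : Matrix (Fin n) (Fin n) ℝ) (w : Fin n → ℝ),
      DoublyStochastic X ∧ RCDS X ∧ X.IsSymm ∧
      (∀ i j, X i j = 0 ↔ A i j = 0) ∧
      (∀ i j, X i j = A i j * (w i + w j)) := by
  classical
  obtain ⟨Y, ⟨hYpos, hYr, hYc⟩, hYR, hYpat⟩ := hpat
  have hAsymm : ∀ i j, A j i = A i j := fun i j => by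
    conv_lhs => rw [← hsymm]
    rfl
  set Z : Matrix (Fin n) (Fin n) ℝ := Matrix.of fun i j => (Y i j + Y j i) / 2 with hZ
  have hZapp : ∀ i j, Z i j = (Y i j + Y j i) / 2 := fun i j => rfl
  have hZpos : ∀ i j, 0 ≤ Z i j := fun i j => by
    rw [hZapp]; linarith [hYpos i j, hYpos j i]
  have hZpat : ∀ i j, Z i j = 0 ↔ A i j = 0 := by
    intro i j
    rw [hZapp]
    constructor
    · intro h
      have h1 : Y i j = 0 := by linarith [hYpos i j, hYpos j i]
      exact (hYpat i j).mp h1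
    · intro h
      have h1 := (hYpat i j).mpr h
      have h2 := (hYpat j i).mpr (by rw [hAsymm i j]; exact h)
      rw [h1, h2]; ring
  have hZDS : DoublyStochastic Z := by
    refine ⟨hZpos, fun i => ?_, fun j => ?_⟩
    · simp only [hZapp]
      rw [← Finset.sum_div, Finset.sum_add_distrib, hYr i, hYc i]
      norm_num
    · simp only [hZapp]
      rw [← Finset.sum_div, Finset.sum_add_distrib, hYc j, hYr j]
      norm_num
  have hZposd : ∀ (σ : Equiv.Perm (Fin n)), (∀ i, 0 < Z i (σ i)) →
      (∀ i, 0 < Y i (σ i)) ∧ (∀ i, 0 < Y i (σ⁻¹ i)) := by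
    intro σ hσ
    have hY' : ∀ i, 0 < Y i (σ i) ∧ 0 < Y (σ i) i := by
      intro i
      have h := hσ i
      have hA : A i (σ i) ≠ 0 := fun h0 => by
        rw [(hZpat i (σ i)).mpr h0] at h; exact lt_irrefl _ h
      constructor
      · exact lt_of_le_of_ne (hYpos _ _) fun h0 => hA ((hYpat _ _).mp h0.symm)
      · refine lt_of_le_of_ne (hYpos _ _) fun h0 => ?_
        have h3 : A (σ i) i = 0 := (hYpat _ _).mp h0.symm
        rw [hAsymm i (σ i)] at h3
        exact hA h3
    refine ⟨fun i => (hY' i).1, fun i => ?_⟩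
    have := (hY' (σ⁻¹ i)).2
    simpa using this
  have hZsum : ∀ (σ : Equiv.Perm (Fin n)), (∀ i, 0 < Z i (σ i)) →
      ∑ i, Z i (σ i) = (∑ i, Y i (σ i) + ∑ i, Y i (σ⁻¹ i)) / 2 := by
    intro σ hσ
    simp only [hZapp]
    rw [← Finset.sum_div, Finset.sum_add_distrib]
    congr 2
    rw [← Equiv.sum_comp σ⁻¹ (fun i => Y (σ i) i)]
    simp
  have hZR : RCDS Z := by
    intro σ τ hσ hτ
    obtain ⟨hσ1, hσ2⟩ := hZposd σ hσ
    obtain ⟨hτ1, hτ2⟩ := hZposd τ hτ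
    rw [hZsum σ hσ, hZsum τ hτ, hYR σ τ hσ1 hτ1, hYR σ⁻¹ τ⁻¹ hσ2 hτ2]
  obtain ⟨u, v, huv⟩ := exists_uv A Z hA01 hZDS hZR hZpat
  have hZsymm : ∀ i j, Z i j = Z j i := fun i j => by rw [hZapp, hZapp]; ring
  have hconst : ∀ i j, (u - v) i = (u - v) j := by
    refine fi_constant hFI (u - v) fun i j hA => ?_
    have hA1 : A i j = 1 := (hA01 i j).resolve_left hA
    have hA2 : A j i = 1 := by rw [hAsymm i j]; exact hA1
    have h1 := huv i j
    have h2 := huv j i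
    rw [hA1, one_mul] at h1
    rw [hA2, one_mul] at h2
    rw [hZsymm i j] at h1
    rw [h1] at h2
    simp only [Pi.sub_apply]
    linarith
  set w : Fin n → ℝ := fun i => (u i + v i) / 2 with hw
  have hform : ∀ i j, Z i j = A i j * (w i + w j) := by
    intro i j
    rw [huv i j]
    have h := hconst i j
    simp only [Pi.sub_apply] at h
    have : u i + v j = w i + w j := by simp only [hw]; linarith
    rw [this]
  refine ⟨Z, w, hZDS, hZR, ?_, hZpat, hform⟩
  ext i j
  exact hZsymm j i
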